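/- Let μ > 0 and let R : ℝ^p × ℝ^q → ℝ ∪ {+∞} be lower semicontinuous and 1-coercive. Then the function (β,γ) ↦ φ_μ(γ) + R(β,γ) is level compact on ℝ^p × ℝ^q. -/

import Mathlib

open Matrix Real Filter Topology Bornology
open scoped Pointwise

noncomputable section

abbrev Vec (k : ℕ) : Type := Fin k → ℝ

/-- Euclidean norm of a vector. -/
def eNorm {ι : Type*} [Fintype ι] (x : ι → ℝ) : ℝ := Real.sqrt (∑ j, (x j) ^ 2)

/-- Squared Euclidean norm of a pair of vectors. -/
def sqnorm2 {p q : ℕ} (w : Vec p × Vec q) : ℝ :=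
  (∑ j, (w.1 j) ^ 2) + ∑ j, (w.2 j) ^ 2

/-- ℓ²→ℓ² operator norm of a matrix (its largest singular value). -/
def opNorm {ι κ : Type*} [Fintype ι] [Fintype κ] (M : Matrix ι κ ℝ) : ℝ :=
  sInf {c : ℝ | 0 ≤ c ∧ ∀ x : κ → ℝ, eNorm (M.mulVec x) ≤ c * eNorm x}

/-- Smallest eigenvalue of a symmetric matrix, via Rayleigh quotients. -/
def minEig {ι : Type*} [Fintype ι] (M : Matrix ι ι ℝ) : ℝ :=
  sInf {r : ℝ | ∃ x : ι → ℝ, eNorm x = 1 ∧ r = x ⬝ᵥ M.mulVec x}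

/-- Largest eigenvalue of a symmetric matrix, via Rayleigh quotients. -/
def maxEig {ι : Type*} [Fintype ι] (M : Matrix ι ι ℝ) : ℝ :=
  sSup {r : ℝ | ∃ x : ι → ℝ, eNorm x = 1 ∧ r = x ⬝ᵥ M.mulVec x}

/-- The log-barrier (perspective of the negative log). -/
def phiBar (μ : ℝ) {q : ℕ} (γ : Vec q) : EReal :=
  if μ = 0 then (if ∀ j, 0 ≤ γ j then (0 : EReal) else ⊤)
  else if 0 < μ then
    (if ∀ j, 0 < γ j then (((-μ) * ∑ j, Real.log (γ j / μ) : ℝ) : EReal) else ⊤)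
  else ⊤

/-- The coupling function κ_η. -/
def kappaFun (η : ℝ) {p q : ℕ} (w : Vec p × Vec q) : ℝ := η / 2 * sqnorm2 w

/-- 1-coercivity: liminf of F(w)/‖w‖ as ‖w‖ → ∞ is positive. -/
def OneCoercive {p q : ℕ} (R : Vec p × Vec q → EReal) : Prop :=
  ∃ c : ℝ, 0 < c ∧ ∃ r : ℝ, ∀ w : Vec p × Vec q,
    r ≤ Real.sqrt (sqnorm2 w) → ((c * Real.sqrt (sqnorm2 w) : ℝ) : EReal) ≤ R w

/-- Data of a linear mixed-effects model. -/
structure LMEData (m p q : ℕ) where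
  n : Fin m → ℕ
  X : ∀ i, Matrix (Fin (n i)) (Fin p) ℝ
  Z : ∀ i, Matrix (Fin (n i)) (Fin q) ℝ
  y : ∀ i, Fin (n i) → ℝ
  lam : ∀ i, Matrix (Fin (n i)) (Fin (n i)) ℝ

namespace LMEData

variable {m p q : ℕ}

/-- Ω_i(Γ) = Z_i Γ Z_iᵀ + Λ_i. -/
def Omega (D : LMEData m p q) (Γ : Matrix (Fin q) (Fin q) ℝ) (i : Fin m) :
    Matrix (Fin (D.n i)) (Fin (D.n i)) ℝ :=
  D.Z i * Γ * (D.Z i)ᵀ + D.lam i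

/-- The marginal negative log-likelihood L_ML(β, Γ). -/
def LML (D : LMEData m p q) (β : Vec p) (Γ : Matrix (Fin q) (Fin q) ℝ) : ℝ :=
  ∑ i, ((1 : ℝ) / 2 * ((D.y i - D.X i *ᵥ β) ⬝ᵥ ((D.Omega Γ i)⁻¹ *ᵥ (D.y i - D.X i *ᵥ β)))
    + (1 : ℝ) / 2 * Real.log (D.Omega Γ i).det)

/-- L(β, γ) = L_ML(β, Diag γ). -/
def L (D : LMEData m p q) (β : Vec p) (γ : Vec q) : ℝ := D.LML β (Matrix.diagonal γ)

/-- ν = max_i (1/2) μ_min(Λ_i)^{-2} σ_max(Z_i)^4. -/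
def nu (D : LMEData m p q) : ℝ :=
  ⨆ i : Fin m, (1 : ℝ) / 2 * ((minEig (D.lam i)) ^ 2)⁻¹ * (opNorm (D.Z i)) ^ 4

/-- η̄ = ν m. -/
def etabar (D : LMEData m p q) : ℝ := D.nu * m

/-- L_{η,μ}((β,γ),(β̃,γ̃)) = L(β,γ) + φ_μ(γ) + κ_η(β−β̃,γ−γ̃). -/
def Lrelax (D : LMEData m p q) (η μ : ℝ) (x w : Vec p × Vec q) : EReal :=
  ((D.L x.1 x.2 + kappaFun η (x - w) : ℝ) : EReal) + phiBar μ x.2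

/-- The optimal value function u_{η,μ} (with extended-real values). -/
def uval (D : LMEData m p q) (η μ : ℝ) (w : Vec p × Vec q) : EReal :=
  ⨅ x : Vec p × Vec q, D.Lrelax η μ x w

/-- The (real-valued) optimal value function u_{η,μ}. -/
def ufun (D : LMEData m p q) (η μ : ℝ) (w : Vec p × Vec q) : ℝ := (D.uval η μ w).toReal

/-- Partial gradient ∇_β L. -/
def gradB (D : LMEData m p q) (β : Vec p) (γ : Vec q) : Vec p :=
  fun j => fderiv ℝ (fun b => D.L b γ) β (Pi.single j 1)

/-- Partial gradient ∇_γ L. -/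
def gradG (D : LMEData m p q) (β : Vec p) (γ : Vec q) : Vec q :=
  fun j => fderiv ℝ (fun g => D.L β g) γ (Pi.single j 1)

/-- The map G_{η,μ}. -/
def Gmap (D : LMEData m p q) (η μ : ℝ) (x : Vec p × Vec q × Vec q) (w : Vec p × Vec q) :
    Vec p × Vec q × Vec q :=
  (D.gradB x.1 x.2.1 + η • (x.1 - w.1),
   D.gradG x.1 x.2.1 + η • (x.2.1 - w.2) - x.2.2,
   fun j => x.2.2 j * x.2.1 j - μ)

/-- Second-derivative block ∇²_{ββ} L. -/
def hessBB (D : LMEData m p q) (β : Vec p) (γ : Vec q) : Matrix (Fin p) (Fin p) ℝ :=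
  Matrix.of fun j k => fderiv ℝ (fun b => D.gradB b γ j) β (Pi.single k 1)

/-- Second-derivative block ∇²_{γγ} L. -/
def hessGG (D : LMEData m p q) (β : Vec p) (γ : Vec q) : Matrix (Fin q) (Fin q) ℝ :=
  Matrix.of fun j k => fderiv ℝ (fun g => D.gradG β g j) γ (Pi.single k 1)

/-- Second-derivative block ∇²_{γβ} L (the p×q cross block). -/
def hessGB (D : LMEData m p q) (β : Vec p) (γ : Vec q) : Matrix (Fin p) (Fin q) ℝ :=
  Matrix.of fun j k => fderiv ℝ (fun g => D.gradB β g j) γ (Pi.single k 1)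

/-- Second-derivative block ∇²_{βγ} L (the q×p cross block). -/
def hessBG (D : LMEData m p q) (β : Vec p) (γ : Vec q) : Matrix (Fin q) (Fin p) ℝ :=
  Matrix.of fun j k => fderiv ℝ (fun b => D.gradG b γ j) β (Pi.single k 1)

end LMEData

/-- f(r, M) = (1/2)(rᵀM⁻¹r + ln det M). -/
def fRM {n : ℕ} (r : Vec n) (M : Matrix (Fin n) (Fin n) ℝ) : ℝ :=
  (1 : ℝ) / 2 * (r ⬝ᵥ (M⁻¹ *ᵥ r) + Real.log M.det)


/-- phiBar never takes the value ⊥. -/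
lemma phiBar_ne_bot {q : ℕ} (μ : ℝ) (γ : Vec q) : phiBar μ γ ≠ ⊥ := by
  unfold phiBar
  split_ifs <;> first | exact EReal.coe_ne_bot _ | simp

lemma phiBar_pos_eq {q : ℕ} {μ : ℝ} (hμ : 0 < μ) {γ : Vec q} (h : ∀ j, 0 < γ j) :
    phiBar μ γ = (((-μ) * ∑ j, Real.log (γ j / μ) : ℝ) : EReal) := by
  simp [phiBar, hμ.ne', hμ, h]

lemma phiBar_not_pos_eq {q : ℕ} {μ : ℝ} (hμ : 0 < μ) {γ : Vec q} (h : ¬ ∀ j, 0 < γ j) :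
    phiBar μ γ = ⊤ := by
  simp [phiBar, hμ.ne', hμ, h]

/-- The log-barrier is lower semicontinuous for μ > 0. -/
lemma phiBar_lsc {q : ℕ} {μ : ℝ} (hμ : 0 < μ) :
    LowerSemicontinuous (fun γ : Vec q => phiBar μ γ) := by
  intro x y hy
  have hy' : y < phiBar μ x := hy
  obtain ⟨a, hya, hax0⟩ := EReal.lt_iff_exists_real_btwn.1 hy'
  have hax : (a : EReal) < phiBar μ x := hax0
  refine Filter.Eventually.mono ?_ (fun z (hz : (a : EReal) < phiBar μ z) => lt_trans hya hz)
  by_cases hx : ∀ j, 0 < x j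
  · -- continuous region
    set h : Vec q → ℝ := fun γ => (-μ) * ∑ j, Real.log (γ j / μ) with hh
    have hcont : ContinuousAt h x := by
      apply ContinuousAt.mul continuousAt_const
      refine tendsto_finset_sum _ fun j _ => ?_
      have h1 : ContinuousAt (fun γ : Vec q => γ j / μ) x :=
        (by fun_prop : Continuous (fun γ : Vec q => γ j / μ)).continuousAt
      have h2 : ContinuousAt Real.log (x j / μ) :=
        Real.continuousAt_log (ne_of_gt (div_pos (hx j) hμ))
      exact ContinuousAt.comp (x := x) h2 h1
    have hax' : a < h x := by
      rw [phiBar_pos_eq hμ hx] at hax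
      exact_mod_cast hax
    have E1 : ∀ᶠ z : Vec q in nhds x, ∀ j, 0 < z j := by
      rw [Filter.eventually_all]
      intro j
      exact (continuous_apply j).continuousAt.preimage_mem_nhds (Ioi_mem_nhds (hx j))
    have E2 : ∀ᶠ z : Vec q in nhds x, a < h z :=
      continuousAt_const.eventually_lt hcont hax'
    filter_upwards [E1, E2] with z h1 h2
    rw [phiBar_pos_eq hμ h1]
    exact_mod_cast h2
  · -- boundary / exterior : phiBar blows up
    push_neg at hx
    obtain ⟨j, hj⟩ := hx
    set S : ℝ := ∑ k, |x k| with hS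
    have hSnn : 0 ≤ S := Finset.sum_nonneg fun k _ => abs_nonneg _
    set M : ℝ := μ + 1 + S with hM
    have hMμ : μ < M := by simp only [hM]; linarith
    have hMpos : 0 < M := lt_trans hμ hMμ
    have hlogM : 0 ≤ Real.log (M / μ) :=
      Real.log_nonneg ((one_le_div hμ).2 hMμ.le)
    set t : ℝ := -(a + μ * q * Real.log (M / μ) + 1) / μ with ht
    set δ : ℝ := μ * Real.exp t with hδ
    have hδpos : 0 < δ := by positivity
    have hlogδ : Real.log (δ / μ) = t := by
      have hδμ : δ / μ = Real.exp t := by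
        rw [hδ]; field_simp
      rw [hδμ, Real.log_exp]
    have E1 : ∀ᶠ z : Vec q in nhds x, ∀ k, z k < M := by
      rw [Filter.eventually_all]
      intro k
      have hk : x k < M := by
        have h1 : x k ≤ |x k| := le_abs_self _
        have h2 : |x k| ≤ S := Finset.single_le_sum (f := fun k => |x k|)
          (fun k _ => abs_nonneg _) (Finset.mem_univ k)
        simp only [hM]; linarith
      exact (continuous_apply k).continuousAt.preimage_mem_nhds (Iio_mem_nhds hk)
    have E2 : ∀ᶠ z : Vec q in nhds x, z j < δ :=
      (continuous_apply j).continuousAt.preimage_mem_nhds (Iio_mem_nhds (lt_of_le_of_lt hj hδpos))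
    filter_upwards [E1, E2] with z h1 h2
    by_cases hz : ∀ k, 0 < z k
    · rw [phiBar_pos_eq hμ hz]
      have key : ∑ k, Real.log (z k / μ) ≤ Real.log (δ / μ) + q * Real.log (M / μ) := by
        have hsplit : ∑ k, Real.log (z k / μ)
            = Real.log (z j / μ) + ∑ k ∈ Finset.univ.erase j, Real.log (z k / μ) := by
          exact (Finset.add_sum_erase _ _ (Finset.mem_univ j)).symm
        rw [hsplit]
        have hb1 : Real.log (z j / μ) ≤ Real.log (δ / μ) :=
          Real.log_le_log (div_pos (hz j) hμ) ((div_le_div_iff_of_pos_right hμ).2 h2.le)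
        have hb2 : ∑ k ∈ Finset.univ.erase j, Real.log (z k / μ)
            ≤ ∑ _k ∈ Finset.univ.erase j, Real.log (M / μ) :=
          Finset.sum_le_sum fun k _ =>
            Real.log_le_log (div_pos (hz k) hμ) ((div_le_div_iff_of_pos_right hμ).2 (h1 k).le)
        have hcard : ((Finset.univ.erase j).card : ℝ) ≤ (q : ℝ) := by
          have := (Finset.card_erase_le (s := (Finset.univ : Finset (Fin q))) (a := j)).trans
            (le_of_eq (Finset.card_univ.trans (Fintype.card_fin q)))
          exact_mod_cast this
        have hb3 : (∑ _k ∈ Finset.univ.erase j, Real.log (M / μ)) ≤ q * Real.log (M / μ) := by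
          rw [Finset.sum_const, nsmul_eq_mul]
          exact mul_le_mul_of_nonneg_right hcard hlogM
        linarith
      have hfin : a < (-μ) * ∑ k, Real.log (z k / μ) := by
        have h3 : (-μ) * (Real.log (δ / μ) + q * Real.log (M / μ))
            ≤ (-μ) * ∑ k, Real.log (z k / μ) :=
          mul_le_mul_of_nonpos_left key (by linarith)
        have h4 : (-μ) * (Real.log (δ / μ) + q * Real.log (M / μ)) = a + 1 := by
          rw [hlogδ, ht]; field_simp; ring
        linarith
      exact_mod_cast hfin
    · rw [phiBar_not_pos_eq hμ hz]
      exact lt_of_le_of_ne le_top (EReal.coe_ne_top a)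

/-- For μ > 0 and R lsc and 1-coercive, φ_μ + R is level compact. -/
theorem logbarrier_plus_coercive_level_compact
    {p q : ℕ} (hp : 0 < p) (hq : 0 < q) (μ : ℝ) (hμ : 0 < μ)
    (R : Vec p × Vec q → EReal) (hRbot : ∀ w, R w ≠ ⊥)
    (hRlsc : LowerSemicontinuous R) (hRco : OneCoercive R) :
    ∀ c : ℝ, IsCompact {w : Vec p × Vec q | phiBar μ w.2 + R w ≤ (c : EReal)} := by
  intro c
  obtain ⟨c₀, hc₀, r, hr⟩ := hRco
  have hlsc : LowerSemicontinuous fun w : Vec p × Vec q => phiBar μ w.2 + R w :=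
    LowerSemicontinuous.add' (LowerSemicontinuous.comp (phiBar_lsc hμ) continuous_snd) hRlsc
      fun w => EReal.continuousAt_add (Or.inr (hRbot w)) (Or.inl (phiBar_ne_bot μ w.2))
  have hclosed : IsClosed {w : Vec p × Vec q | phiBar μ w.2 + R w ≤ (c : EReal)} :=
    hlsc.isClosed_preimage (c : EReal)
  set a : ℝ := 2 * q * Real.sqrt μ with ha
  have hann : 0 ≤ a := by positivity
  set T : ℝ := max 1 ((a + |c| + 1) / c₀) with hT
  have hT1 : 1 ≤ T := le_max_left _ _
  have hTc : a + |c| + 1 ≤ c₀ * T := by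
    rw [mul_comm]
    exact (div_le_iff₀ hc₀).1 (le_max_right _ _)
  set B : ℝ := max r (max 1 (T ^ 2)) with hB
  have hB1 : 1 ≤ B := le_trans (le_max_left _ _) (le_max_right r _)
  have hBr : r ≤ B := le_max_left _ _
  have hBT : T ^ 2 ≤ B := le_trans (le_max_right _ _) (le_max_right r _)
  have hsqnn : ∀ w : Vec p × Vec q, 0 ≤ sqnorm2 w := by
    intro w
    unfold sqnorm2
    positivity
  have key : ∀ w ∈ {w : Vec p × Vec q | phiBar μ w.2 + R w ≤ (c : EReal)},
      Real.sqrt (sqnorm2 w) ≤ B := by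
    intro w hw
    by_contra hcon
    push_neg at hcon
    set s := Real.sqrt (sqnorm2 w) with hs
    have hs0 : 0 < s := lt_of_lt_of_le (by linarith) hcon.le
    have hsq : s ^ 2 = sqnorm2 w := Real.sq_sqrt (hsqnn w)
    have hRw : ((c₀ * s : ℝ) : EReal) ≤ R w := hr w (le_trans hBr hcon.le)
    have hw' : phiBar μ w.2 + R w ≤ (c : EReal) := hw
    by_cases hpos : ∀ j, 0 < w.2 j
    · -- phi is finite, get quantitative contradiction
      have hcoord : ∀ j, w.2 j ≤ s := by
        intro j
        have h1 : (w.2 j) ^ 2 ≤ sqnorm2 w := by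
          have h2 : w.2 j ^ 2 ≤ ∑ k, (w.2 k) ^ 2 := Finset.single_le_sum
            (f := fun k => (w.2 k) ^ 2) (fun k _ => sq_nonneg _) (Finset.mem_univ j)
          have h3 : (0 : ℝ) ≤ ∑ k, (w.1 k) ^ 2 := Finset.sum_nonneg fun k _ => sq_nonneg _
          unfold sqnorm2
          linarith
        calc w.2 j = Real.sqrt ((w.2 j) ^ 2) := (Real.sqrt_sq (hpos j).le).symm
          _ ≤ Real.sqrt (s ^ 2) := Real.sqrt_le_sqrt (by linarith [hsq])
          _ = s := Real.sqrt_sq hs0.le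
      have hsμ : 0 < s / μ := div_pos hs0 hμ
      have hlog1 : ∀ j, Real.log (w.2 j / μ) ≤ Real.log (s / μ) := fun j =>
        Real.log_le_log (div_pos (hpos j) hμ) ((div_le_div_iff_of_pos_right hμ).2 (hcoord j))
      have hsum : ∑ j, Real.log (w.2 j / μ) ≤ q * Real.log (s / μ) := by
        calc ∑ j, Real.log (w.2 j / μ) ≤ ∑ _j : Fin q, Real.log (s / μ) :=
              Finset.sum_le_sum fun j _ => hlog1 j
          _ = q * Real.log (s / μ) := by
              rw [Finset.sum_const, nsmul_eq_mul]
              simp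
      have hlog2 : Real.log (s / μ) ≤ 2 * Real.sqrt (s / μ) := by
        have h0 : 0 < Real.sqrt (s / μ) := Real.sqrt_pos.2 hsμ
        have h1 := Real.log_le_sub_one_of_pos h0
        have h2 : Real.log (Real.sqrt (s / μ)) = Real.log (s / μ) / 2 := Real.log_sqrt hsμ.le
        linarith
      have hsqrtdiv : Real.sqrt (s / μ) = Real.sqrt s / Real.sqrt μ :=
        Real.sqrt_div hs0.le μ
      have hμs : Real.sqrt μ * Real.sqrt μ = μ := Real.mul_self_sqrt hμ.le
      have hμsp : 0 < Real.sqrt μ := Real.sqrt_pos.2 hμ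
      have hbound : μ * (q : ℝ) * Real.log (s / μ) ≤ a * Real.sqrt s := by
        have h1 : μ * (q : ℝ) * Real.log (s / μ) ≤ μ * (q : ℝ) * (2 * Real.sqrt (s / μ)) :=
          mul_le_mul_of_nonneg_left hlog2 (by positivity)
        have h2 : μ * (q : ℝ) * (2 * Real.sqrt (s / μ)) = a * Real.sqrt s := by
          rw [hsqrtdiv, ha]
          field_simp
          linear_combination (-1 : ℝ) * hμs
        linarith
      have hphi : ((-(a * Real.sqrt s) : ℝ) : EReal) ≤ phiBar μ w.2 := by
        rw [phiBar_pos_eq hμ hpos]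
        have : -(a * Real.sqrt s) ≤ (-μ) * ∑ j, Real.log (w.2 j / μ) := by
          have h1 : (-μ) * ∑ j, Real.log (w.2 j / μ) ≥ (-μ) * ((q : ℝ) * Real.log (s / μ)) :=
            mul_le_mul_of_nonpos_left hsum (by linarith)
          nlinarith
        exact_mod_cast this
      have hge : ((-(a * Real.sqrt s) + c₀ * s : ℝ) : EReal) ≤ phiBar μ w.2 + R w := by
        rw [EReal.coe_add]
        exact add_le_add hphi hRw
      have hlt : (c : ℝ) < -(a * Real.sqrt s) + c₀ * s := by
        set t := Real.sqrt s with htdef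
        have ht2 : t ^ 2 = s := Real.sq_sqrt hs0.le
        have htT : T ≤ t := by
          have h1 : T ^ 2 ≤ s := le_trans hBT hcon.le
          calc T = Real.sqrt (T ^ 2) := (Real.sqrt_sq (by linarith)).symm
            _ ≤ Real.sqrt s := Real.sqrt_le_sqrt h1
        have hc' : c ≤ |c| := le_abs_self c
        have h1 : c₀ * T ≤ c₀ * t := mul_le_mul_of_nonneg_left htT hc₀.le
        have h2 : |c| + 1 ≤ c₀ * t - a := by linarith
        have h3 : 1 ≤ t := le_trans hT1 htT
        have h4 : (1 : ℝ) * (|c| + 1) ≤ t * (c₀ * t - a) :=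
          mul_le_mul h3 h2 (by positivity) (by linarith)
        have h5 : t * (c₀ * t - a) = c₀ * s - a * t := by rw [← ht2]; ring
        linarith
      have : (c : EReal) < phiBar μ w.2 + R w :=
        lt_of_lt_of_le (by exact_mod_cast hlt) hge
      exact absurd hw' (not_le.2 this)
    · -- phi = ⊤
      rw [phiBar_not_pos_eq hμ hpos, EReal.top_add_of_ne_bot (hRbot w)] at hw'
      exact absurd hw' (by simp)
  have hsub : {w : Vec p × Vec q | phiBar μ w.2 + R w ≤ (c : EReal)} ⊆
      Metric.closedBall 0 B := by
    intro w hw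
    have hsB := key w hw
    rw [Metric.mem_closedBall, dist_zero_right, Prod.norm_def]
    have hcomp : ∀ (k : ℕ) (v : Vec k), (∑ j, (v j) ^ 2) ≤ sqnorm2 w → ‖v‖ ≤ B := by
      intro k v hv
      rw [pi_norm_le_iff_of_nonneg (by linarith)]
      intro i
      have h1 : (v i) ^ 2 ≤ sqnorm2 w :=
        le_trans (Finset.single_le_sum (f := fun j => (v j) ^ 2)
          (fun j _ => sq_nonneg _) (Finset.mem_univ i)) hv
      have h2 : ‖v i‖ = Real.sqrt ((v i) ^ 2) := by
        rw [Real.sqrt_sq_eq_abs, Real.norm_eq_abs]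
      rw [h2]
      exact le_trans (Real.sqrt_le_sqrt h1) hsB
    have h1 : (∑ j, (w.1 j) ^ 2) ≤ sqnorm2 w := by
      unfold sqnorm2
      have : (0 : ℝ) ≤ ∑ j, (w.2 j) ^ 2 := Finset.sum_nonneg fun j _ => sq_nonneg _
      linarith
    have h2 : (∑ j, (w.2 j) ^ 2) ≤ sqnorm2 w := by
      unfold sqnorm2
      have : (0 : ℝ) ≤ ∑ j, (w.1 j) ^ 2 := Finset.sum_nonneg fun j _ => sq_nonneg _
      linarith
    exact max_le (hcomp p w.1 h1) (hcomp q w.2 h2)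
  exact (isCompact_closedBall (0 : Vec p × Vec q) B).of_isClosed_subset hclosed hsub
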